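/- Let f : ℝⁿ → ℝ ∪ {∞} be proper convex lower semicontinuous, let g : ℝⁿ → ℝ be differentiable with ∇g Lipschitz continuous on the domain of f with constant λ ≥ 0, and let h = f + g. If 0 < ν ≤ λ⁻¹, then for all ξ, ξ′ ∈ ℝⁿ with ξ′ in the domain of f: h(prox_{νf}(ξ)) − h(ξ′) ≤ −(2ν)⁻¹ |prox_{νf}(ξ) − ξ′|² − ν⁻¹ ⟨prox_{νf}(ξ) − ξ′, ξ′ − ν∇g(ξ′) − ξ⟩. -/

import Mathlib

open scoped RealInnerProductSpace

/-- Descent lemma. -/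
lemma descent_aux {E : Type*} [NormedAddCommGroup E] [InnerProductSpace ℝ E] [CompleteSpace E]
    (g : E → ℝ) (hg : Differentiable ℝ g) (lam : ℝ) (hlam : 0 ≤ lam)
    (s : Set E) (hs : Convex ℝ s)
    (hLip : LipschitzOnWith (Real.toNNReal lam) (gradient g) s)
    (x y : E) (hx : x ∈ s) (hy : y ∈ s) :
    g y ≤ g x + ⟪gradient g x, y - x⟫ + lam / 2 * ‖y - x‖ ^ 2 := by
  set v := y - x with hv
  have hmem : ∀ t ∈ Set.Icc (0:ℝ) 1, x + t • v ∈ s := by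
    intro t ht
    have h1 : (1 - t) • x + t • y ∈ s := hs hx hy (by linarith [ht.2]) ht.1 (by ring)
    have h2 : x + t • v = (1 - t) • x + t • y := by
      simp [hv, smul_sub]; module
    rwa [h2]
  have hφ : ∀ t : ℝ, HasDerivAt (fun t => g (x + t • v)) ⟪gradient g (x + t • v), v⟫ t := by
    intro t
    have h1 : HasDerivAt (fun t : ℝ => x + t • v) v t := by
      simpa using ((hasDerivAt_id t).smul_const v).const_add x
    have h3 : HasFDerivAt g (InnerProductSpace.toDual ℝ E (gradient g (x + t • v)) : E →L[ℝ] ℝ)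
        (x + t • v) := (hg (x + t • v)).hasGradientAt.hasFDerivAt
    have := h3.comp_hasDerivAt t h1
    simpa [InnerProductSpace.toDual_apply_apply, Function.comp_def] using this
  set ψ : ℝ → ℝ := fun t => g (x + t • v) - t * ⟪gradient g x, v⟫ - lam / 2 * t ^ 2 * ‖v‖ ^ 2
    with hψ
  have hψ' : ∀ t : ℝ, HasDerivAt ψ
      (⟪gradient g (x + t • v), v⟫ - ⟪gradient g x, v⟫ - lam * t * ‖v‖ ^ 2) t := by
    intro t
    have h1 : HasDerivAt (fun t : ℝ => t * ⟪gradient g x, v⟫) ⟪gradient g x, v⟫ t := by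
      simpa using (hasDerivAt_id t).mul_const ⟪gradient g x, v⟫
    have h2 : HasDerivAt (fun t : ℝ => lam / 2 * t ^ 2 * ‖v‖ ^ 2) (lam * t * ‖v‖ ^ 2) t := by
      have := ((hasDerivAt_pow 2 t).const_mul (lam / 2)).mul_const (‖v‖ ^ 2)
      refine this.congr_deriv ?_
      ring
    exact ((hφ t).sub h1).sub h2
  have anti : AntitoneOn ψ (Set.Icc 0 1) := by
    apply antitoneOn_of_deriv_nonpos (convex_Icc 0 1)
    · exact fun t _ => ((hψ' t).continuousAt).continuousWithinAt
    · exact fun t _ => ((hψ' t).differentiableAt).differentiableWithinAt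
    · intro t ht
      rw [interior_Icc] at ht
      rw [(hψ' t).deriv]
      have hmt : x + t • v ∈ s := hmem t ⟨le_of_lt ht.1, le_of_lt ht.2⟩
      have hlip' : ‖gradient g (x + t • v) - gradient g x‖ ≤ lam * (t * ‖v‖) := by
        have := hLip.dist_le_mul _ hmt _ hx
        rw [dist_eq_norm] at this
        have h2 : dist (x + t • v) x = t * ‖v‖ := by
          rw [dist_eq_norm]
          simp [norm_smul, abs_of_pos ht.1]
        rw [h2, Real.coe_toNNReal lam hlam] at this
        exact this
      have hin : ⟪gradient g (x + t • v) - gradient g x, v⟫ ≤ lam * t * ‖v‖ ^ 2 := by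
        calc ⟪gradient g (x + t • v) - gradient g x, v⟫
            ≤ ‖gradient g (x + t • v) - gradient g x‖ * ‖v‖ := real_inner_le_norm _ _
          _ ≤ lam * (t * ‖v‖) * ‖v‖ := by
              apply mul_le_mul_of_nonneg_right hlip' (norm_nonneg _)
          _ = lam * t * ‖v‖ ^ 2 := by ring
      rw [inner_sub_left] at hin
      linarith
  have key := anti (Set.left_mem_Icc.mpr zero_le_one) (Set.right_mem_Icc.mpr zero_le_one)
    zero_le_one
  have h0 : ψ 0 = g x := by simp [hψ]
  have h1 : ψ 1 = g y - ⟪gradient g x, v⟫ - lam / 2 * ‖v‖ ^ 2 := by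
    simp [hψ, hv]
  rw [h0, h1] at key
  linarith

set_option maxHeartbeats 1000000 in
theorem stmt_3 (n : ℕ) (f : EuclideanSpace ℝ (Fin n) → EReal)
    (hconv : ∀ x y : EuclideanSpace ℝ (Fin n), ∀ a b : ℝ, 0 ≤ a → 0 ≤ b → a + b = 1 →
      f (a • x + b • y) ≤ (a : EReal) * f x + (b : EReal) * f y)
    (hproper_bot : ∀ x, f x ≠ ⊥) (hproper_top : ∃ x, f x ≠ ⊤)
    (hlsc : LowerSemicontinuous f)
    (g : EuclideanSpace ℝ (Fin n) → ℝ) (hg : Differentiable ℝ g)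
    (lam : ℝ) (hlam : 0 ≤ lam)
    (hLip : LipschitzOnWith (Real.toNNReal lam) (gradient g) {x | f x ≠ ⊤})
    (ν : ℝ) (hν : 0 < ν) (hνlam : ν * lam ≤ 1)  -- ν ≤ λ⁻¹
    (prox : EuclideanSpace ℝ (Fin n) → EuclideanSpace ℝ (Fin n))
    (hprox : ∀ x y, f (prox x) + (((2 * ν)⁻¹ * ‖x - prox x‖ ^ 2 : ℝ) : EReal)
        ≤ f y + (((2 * ν)⁻¹ * ‖x - y‖ ^ 2 : ℝ) : EReal))
    (ξ ξ' : EuclideanSpace ℝ (Fin n)) (hdom : f ξ' ≠ ⊤) :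
    f (prox ξ) + ((g (prox ξ) : ℝ) : EReal) ≤ f ξ' +
      (((g ξ' - (2 * ν)⁻¹ * ‖prox ξ - ξ'‖ ^ 2
        - ν⁻¹ * @inner ℝ _ _ (prox ξ - ξ') (ξ' - ν • gradient g ξ' - ξ)) : ℝ) : EReal) := by
  set p := prox ξ with hp
  set B := (f ξ').toReal with hB
  have hfξ' : f ξ' = (B : EReal) := (EReal.coe_toReal hdom (hproper_bot ξ')).symm
  -- f p is finite
  have hfp_top : f p ≠ ⊤ := by
    intro h
    have h2 := hprox ξ ξ'
    rw [← hp, h, hfξ', ← EReal.coe_add, EReal.top_add_coe] at h2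
    exact (EReal.coe_lt_top _).not_ge h2
  set A := (f p).toReal with hA
  have hfp : f p = (A : EReal) := (EReal.coe_toReal hfp_top (hproper_bot p)).symm
  set c : ℝ := (2 * ν)⁻¹ with hc
  have hc0 : 0 < c := by positivity
  -- strong prox inequality (real form): for t ∈ (0,1], A ≤ B - ν⁻¹⟪ξ-p, ξ'-p⟫ + t * c * ‖ξ'-p‖^2
  have hstep : ∀ t : ℝ, 0 < t → t ≤ 1 →
      A ≤ B - 2 * c * ⟪ξ - p, ξ' - p⟫ + t * (c * ‖ξ' - p‖ ^ 2) := by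
    intro t ht0 ht1
    set yt := (1 - t) • p + t • ξ' with hyt
    have hconvt := hconv p ξ' (1 - t) t (by linarith) (le_of_lt ht0) (by ring)
    rw [hfp, hfξ'] at hconvt
    have hconvt' : f yt ≤ (((1 - t) * A + t * B : ℝ) : EReal) := by
      rw [← hyt] at hconvt
      calc f yt ≤ ((1 - t : ℝ) : EReal) * (A : EReal) + (t : ℝ) * (B : EReal) := hconvt
        _ = (((1 - t) * A + t * B : ℝ) : EReal) := by
            rw [← EReal.coe_mul, ← EReal.coe_mul, ← EReal.coe_add]
    have hyt_top : f yt ≠ ⊤ := by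
      intro h; rw [h] at hconvt'; exact (EReal.coe_lt_top _).not_ge hconvt'
    set C := (f yt).toReal with hC
    have hfyt : f yt = (C : EReal) := (EReal.coe_toReal hyt_top (hproper_bot yt)).symm
    have hCle : C ≤ (1 - t) * A + t * B := by
      rw [hfyt] at hconvt'; exact_mod_cast hconvt'
    have hpx := hprox ξ yt
    rw [← hp, hfp, hfyt] at hpx
    have hpx' : A + c * ‖ξ - p‖ ^ 2 ≤ C + c * ‖ξ - yt‖ ^ 2 := by
      rw [← EReal.coe_add, ← EReal.coe_add] at hpx
      exact_mod_cast hpx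
    -- expand ‖ξ - yt‖²
    have hytexp : ξ - yt = (ξ - p) - t • (ξ' - p) := by
      simp [hyt, smul_sub, sub_smul]; module
    have hnorm : ‖ξ - yt‖ ^ 2 = ‖ξ - p‖ ^ 2 - 2 * t * ⟪ξ - p, ξ' - p⟫ + t ^ 2 * ‖ξ' - p‖ ^ 2 := by
      rw [hytexp, norm_sub_sq_real, inner_smul_right, norm_smul]
      simp [abs_of_pos ht0]
      ring
    have hmain : A + c * ‖ξ - p‖ ^ 2 ≤ (1 - t) * A + t * B + c * ‖ξ - yt‖ ^ 2 := by linarith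
    rw [hnorm] at hmain
    have ht : t * A ≤ t * (B - 2 * c * ⟪ξ - p, ξ' - p⟫ + t * (c * ‖ξ' - p‖ ^ 2)) := by
      nlinarith [hmain]
    exact le_of_mul_le_mul_left ht ht0
  have hAB : A ≤ B - 2 * c * ⟪ξ - p, ξ' - p⟫ := by
    apply le_of_forall_pos_le_add
    intro ε hε
    set M := c * ‖ξ' - p‖ ^ 2 with hM
    have hM0 : 0 ≤ M := by positivity
    set t := min 1 (ε / (M + 1)) with ht
    have ht0 : 0 < t := lt_min one_pos (by positivity)
    have ht1 : t ≤ 1 := min_le_left _ _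
    have htM : t * M ≤ ε := by
      calc t * M ≤ (ε / (M + 1)) * M := by
            apply mul_le_mul_of_nonneg_right (min_le_right _ _) hM0
        _ ≤ ε := by
            rw [div_mul_eq_mul_div, div_le_iff₀ (by linarith)]
            nlinarith
    linarith [hstep t ht0 ht1]
  -- descent lemma
  have hpdom : p ∈ {x | f x ≠ ⊤} := hfp_top
  have hξ'dom : ξ' ∈ {x | f x ≠ ⊤} := hdom
  have hsconv : Convex ℝ {x : EuclideanSpace ℝ (Fin n) | f x ≠ ⊤} := by
    intro x hx y hy a b ha hb hab
    have := hconv x y a b ha hb hab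
    intro htop
    rw [htop] at this
    have hx' : f x = ((f x).toReal : EReal) := (EReal.coe_toReal hx (hproper_bot x)).symm
    have hy' : f y = ((f y).toReal : EReal) := (EReal.coe_toReal hy (hproper_bot y)).symm
    rw [hx', hy', ← EReal.coe_mul, ← EReal.coe_mul, ← EReal.coe_add] at this
    exact (EReal.coe_lt_top _).not_ge this
  have hdesc := descent_aux g hg lam hlam _ hsconv hLip ξ' p hξ'dom hpdom
  have hlam2 : lam / 2 ≤ c := by
    rw [hc, inv_eq_one_div, div_le_div_iff₀ (by norm_num) (by positivity)]
    nlinarith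
  -- assemble
  rw [hfp, hfξ', ← EReal.coe_add, ← EReal.coe_add, EReal.coe_le_coe_iff]
  have hdesc' : g p ≤ g ξ' + ⟪p - ξ', gradient g ξ'⟫ + lam / 2 * ‖p - ξ'‖ ^ 2 := by
    rw [real_inner_comm]
    exact hdesc
  have eA : (⟪ξ - p, ξ' - p⟫ : ℝ) = ‖p - ξ'‖ ^ 2 - ⟪p - ξ', ξ - ξ'⟫ := by
    have h1 : ξ - p = (ξ - ξ') - (p - ξ') := by abel
    have h2 : ξ' - p = -(p - ξ') := by abel
    rw [h1, h2, inner_neg_right, inner_sub_left, real_inner_comm (ξ - ξ'),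
      real_inner_self_eq_norm_sq]
    ring
  have eG : (⟪p - ξ', ξ' - ν • gradient g ξ' - ξ⟫ : ℝ)
      = -⟪p - ξ', ξ - ξ'⟫ - ν * ⟪p - ξ', gradient g ξ'⟫ := by
    rw [inner_sub_right, inner_sub_right, inner_smul_right, inner_sub_right]
    ring
  rw [eA] at hAB
  have hνc : ν⁻¹ = 2 * c := by
    rw [hc]; field_simp
  have hN : (0:ℝ) ≤ ‖p - ξ'‖ ^ 2 := by positivity
  rw [eG, hνc]
  have e3 : (2 * c) * (-⟪p - ξ', ξ - ξ'⟫ - ν * ⟪p - ξ', gradient g ξ'⟫)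
      = -(2 * c * ⟪p - ξ', ξ - ξ'⟫) - ⟪p - ξ', gradient g ξ'⟫ := by
    rw [hc]; field_simp
  rw [e3]
  linarith [hAB, hdesc', mul_le_mul_of_nonneg_right hlam2 hN]
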